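/- Let V be a finite-dimensional real normed vector space. For every subset S ⊆ V, the asymptotic cone AC(S) is a closed subset of V. -/

import Mathlib

open Pointwise Bornology

/-- A subset `C` of a real vector space is a cone if `t • C = C` for every `t > 0`. -/
def IsCone {V : Type*} [NormedAddCommGroup V] [NormedSpace ℝ V] (C : Set V) : Prop :=
  ∀ t : ℝ, 0 < t → t • C = C

/-- The asymptotic cone of a subset `S`: the set of `ξ` such that every open cone
containing `ξ` meets `S` in an unbounded set, together with `0`. -/
def asymptoticCone' {V : Type*} [NormedAddCommGroup V] [NormedSpace ℝ V] (S : Set V) : Set V :=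
  {ξ : V | ∀ C : Set V, IsOpen C → IsCone C → ξ ∈ C → ¬ IsBounded (C ∩ S)} ∪ {0}

/-- The asymptotic cone of any subset of a finite-dimensional real normed vector space
is closed. -/
theorem asymptoticCone_isClosed {V : Type*} [NormedAddCommGroup V] [NormedSpace ℝ V]
    [FiniteDimensional ℝ V] (S : Set V) :
    IsClosed (asymptoticCone' S) := by
  rw [← isOpen_compl_iff, isOpen_iff_forall_mem_open]
  intro ξ hξ
  simp only [asymptoticCone', Set.mem_compl_iff, Set.mem_union, Set.mem_setOf_eq,
    Set.mem_singleton_iff, not_or] at hξ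
  obtain ⟨h1, hξ0⟩ := hξ
  push_neg at h1
  obtain ⟨C, hCo, hCc, hξC, hB⟩ := h1
  refine ⟨C \ {0}, ?_, hCo.sdiff isClosed_singleton, ⟨hξC, hξ0⟩⟩
  rintro x ⟨hxC, hx0⟩
  simp only [asymptoticCone', Set.mem_compl_iff, Set.mem_union, Set.mem_setOf_eq,
    Set.mem_singleton_iff, not_or]
  exact ⟨fun h => h C hCo hCc hxC hB, hx0⟩
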